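/- For every m, n ∈ ℕ with n < 2^m and every a < m, there exists a family of sets S_1,...,S_n ⊆ [ℓ] with ℓ = O(n^{1/a} · m^2 / a) such that |S_i| = m for every i, and |S_i ∩ S_j| ≤ a for every i < j. -/

import Mathlib

open Finset Nat

-- (b+1)^b ≤ 3 * b^b
private lemma aux_succ_pow_le (b : ℕ) : (b + 1) ^ b ≤ 3 * b ^ b := by
  rcases Nat.eq_zero_or_pos b with rfl | hb
  · simp
  have hbR : (0:ℝ) < b := by exact_mod_cast hb
  have key : ((b:ℝ) + 1) ^ b ≤ 3 * (b:ℝ) ^ b := by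
    have h1 : (1 : ℝ) + 1 / b ≤ Real.exp (1 / b) := by
      have := Real.add_one_le_exp (1 / (b:ℝ)); linarith
    have h2 : ((1:ℝ) + 1 / b) ^ b ≤ Real.exp (1/(b:ℝ)) ^ b :=
      pow_le_pow_left₀ (by positivity) h1 b
    have h3 : Real.exp (1/(b:ℝ)) ^ b = Real.exp 1 := by
      rw [← Real.exp_nat_mul]
      congr 1
      field_simp
    have h4 : Real.exp 1 ≤ 3 := by
      have := Real.exp_one_lt_d9; linarith
    have h5 : ((b:ℝ) + 1) = (b:ℝ) * (1 + 1/b) := by field_simp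
    calc ((b:ℝ)+1)^b = (b:ℝ)^b * ((1:ℝ)+1/b)^b := by rw [h5, mul_pow]
      _ ≤ (b:ℝ)^b * Real.exp 1 := by
          rw [← h3] at h4 ⊢; exact mul_le_mul_of_nonneg_left h2 (by positivity)
      _ ≤ 3 * (b:ℝ)^b := by nlinarith [pow_nonneg hbR.le b]
  exact_mod_cast key

private lemma aux_pow_le_three_pow_factorial (b : ℕ) : b ^ b ≤ 3 ^ b * b ! := by
  induction b with
  | zero => simp
  | succ b ih =>
      calc (b+1)^(b+1) = (b+1) * (b+1)^b := by ring
        _ ≤ (b+1) * (3 * b^b) := Nat.mul_le_mul_left _ (aux_succ_pow_le b)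
        _ ≤ (b+1) * (3 * (3^b * b !)) :=
            Nat.mul_le_mul_left _ (Nat.mul_le_mul_left _ ih)
        _ = 3^(b+1) * (b+1)! := by rw [Nat.factorial_succ]; ring

private lemma aux_pow_le_choose (b t : ℕ) (ht : 1 ≤ t) : t ^ b ≤ (b * t).choose b := by
  have key : b ! * t ^ b ≤ (b * t).descFactorial b := by
    rw [Nat.descFactorial_eq_prod_range]
    have hfac : b ! = ∏ i ∈ range b, (b - i) := by
      calc b ! = ∏ i ∈ range b, (i + 1) := (Finset.prod_range_add_one_eq_factorial b).symm
        _ = ∏ i ∈ range b, (b - 1 - i + 1) := (Finset.prod_range_reflect (fun i => i + 1) b).symm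
        _ = ∏ i ∈ range b, (b - i) := by
            apply Finset.prod_congr rfl
            intro i hi
            simp only [mem_range] at hi
            omega
    have hpow : t ^ b = ∏ _i ∈ range b, t := by
      rw [Finset.prod_const, card_range]
    rw [hfac, hpow, ← Finset.prod_mul_distrib]
    apply Finset.prod_le_prod'
    intro i hi
    simp only [mem_range] at hi
    have h1 : (b - i) * t = b * t - i * t := by rw [Nat.sub_mul]
    have h2 : i ≤ i * t := Nat.le_mul_of_pos_right i ht
    omega
  rw [Nat.descFactorial_eq_factorial_mul_choose] at key
  exact Nat.le_of_mul_le_mul_left key (Nat.factorial_pos b)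

private lemma aux_div_bound (x d : ℕ) (hd : 0 < d) : x + 1 ≤ (x / d + 1) * d := by
  have h1 := Nat.div_add_mod' x d
  have h2 := Nat.mod_lt x hd
  have h4 : x + 1 ≤ x / d * d + d := by omega
  calc x + 1 ≤ x / d * d + d := h4
    _ = (x / d + 1) * d := by ring

private lemma aux_ceil_pow (n b : ℕ) (hb : 0 < b) :
    n < (⌈(n : ℝ) ^ ((b : ℝ)⁻¹)⌉₊ + 1) ^ b := by
  have hbR : ((b : ℝ)) ≠ 0 := by positivity
  have hx : (n : ℝ) ^ ((b : ℝ)⁻¹) < ((⌈(n : ℝ) ^ ((b : ℝ)⁻¹)⌉₊ + 1 : ℕ) : ℝ) := by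
    have h := Nat.le_ceil ((n : ℝ) ^ ((b : ℝ)⁻¹))
    push_cast
    linarith
  have hne : ((n : ℝ) ^ ((b : ℝ)⁻¹)) ^ (b : ℕ) = (n : ℝ) := by
    rw [← Real.rpow_natCast ((n : ℝ) ^ ((b : ℝ)⁻¹)) b, ← Real.rpow_mul (by positivity),
      inv_mul_cancel₀ hbR, Real.rpow_one]
  have hkey : (n : ℝ) < (((⌈(n : ℝ) ^ ((b : ℝ)⁻¹)⌉₊ + 1 : ℕ)) : ℝ) ^ b := by
    calc (n : ℝ) = ((n : ℝ) ^ ((b : ℝ)⁻¹)) ^ (b : ℕ) := hne.symm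
      _ < _ := pow_lt_pow_left₀ hx (by positivity) (by omega)
  exact_mod_cast hkey

private lemma aux_count (b q s m n : ℕ) (hbm : b ≤ m) (hb1 : 1 ≤ b) (hs1 : 1 ≤ s)
    (hq1 : 9 * m * m + 1 ≤ q * (b * b)) (hf1 : n < s ^ b) :
    m ≤ b * (s * q) ∧
    n * m.choose b * ((b * (s * q) - b).choose (m - b)) < (b * (s * q)).choose m := by
  have f2 : (m.choose b) ^ 2 < q ^ b := by
    have h3 : b ! * m.choose b ≤ m ^ b := by
      rw [← Nat.descFactorial_eq_factorial_mul_choose]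
      exact Nat.descFactorial_le_pow m b
    have h2 : b ^ b ≤ 3 ^ b * b ! := aux_pow_le_three_pow_factorial b
    have hchain : (m.choose b) ^ 2 * (b ^ b) ^ 2 < q ^ b * (b ^ b) ^ 2 := by
      have e3 : (3 * m) ^ 2 = 9 * m * m := by ring
      have e5 : (b * b) ^ b = (b ^ b) ^ 2 := by
        rw [← pow_two, pow_right_comm]
      calc (m.choose b) ^ 2 * (b ^ b) ^ 2 ≤ (m.choose b) ^ 2 * (3 ^ b * b !) ^ 2 :=
            Nat.mul_le_mul_left _ (Nat.pow_le_pow_left h2 2)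
        _ = (3 ^ b) ^ 2 * (b ! * m.choose b) ^ 2 := by ring
        _ ≤ (3 ^ b) ^ 2 * (m ^ b) ^ 2 :=
            Nat.mul_le_mul_left _ (Nat.pow_le_pow_left h3 2)
        _ = ((3 * m) ^ b) ^ 2 := by rw [mul_pow 3 m b, mul_pow]
        _ = ((3 * m) ^ 2) ^ b := pow_right_comm _ _ _
        _ = (9 * m * m) ^ b := by rw [e3]
        _ < (9 * m * m + 1) ^ b := Nat.pow_lt_pow_left (by omega) (by omega)
        _ ≤ (q * (b * b)) ^ b := Nat.pow_le_pow_left hq1 b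
        _ = q ^ b * (b ^ b) ^ 2 := by rw [mul_pow, e5]
    exact Nat.lt_of_mul_lt_mul_right hchain
  have f3 : m ≤ b * (s * q) := by
    have h2 : (b * q) * b = q * (b * b) := by ring
    have h1 : m * b ≤ m * m := Nat.mul_le_mul_left m hbm
    have h1' : m * m ≤ 9 * m * m := by
      have : 1 * (m * m) ≤ 9 * (m * m) := Nat.mul_le_mul_right (m * m) (by omega)
      calc m * m = 1 * (m * m) := by ring
        _ ≤ 9 * (m * m) := this
        _ = 9 * m * m := by ring
    have hmb : m * b < (b * q) * b := by omega
    have hmbq : m < b * q := Nat.lt_of_mul_lt_mul_right hmb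
    calc m ≤ b * q := hmbq.le
      _ = b * (1 * q) := by ring
      _ ≤ b * (s * q) := Nat.mul_le_mul_left b (Nat.mul_le_mul_right q hs1)
  refine ⟨f3, ?_⟩
  have hXpos : 0 < m.choose b := Nat.choose_pos hbm
  have hYpos : 0 < (b * (s * q) - b).choose (m - b) := Nat.choose_pos (by omega)
  have h5 : n * (m.choose b) ^ 2 < s ^ b * q ^ b := by
    calc n * (m.choose b) ^ 2 < s ^ b * (m.choose b) ^ 2 :=
          (Nat.mul_lt_mul_right (pow_pos hXpos 2)).2 hf1
      _ < s ^ b * q ^ b :=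
          (Nat.mul_lt_mul_left (pow_pos (by omega : 0 < s) b)).2 f2
  have h6 : s ^ b * q ^ b ≤ (b * (s * q)).choose b := by
    rw [← mul_pow]
    have hq0 : 0 < q := by
      rcases Nat.eq_zero_or_pos q with rfl | h
      · simp at hq1
      · exact h
    exact aux_pow_le_choose b (s * q) (Nat.mul_pos hs1 hq0)
  have h7 : n * (m.choose b) ^ 2 < (b * (s * q)).choose b := lt_of_lt_of_le h5 h6
  have hid : (b * (s * q)).choose m * m.choose b
      = (b * (s * q)).choose b * ((b * (s * q) - b).choose (m - b)) :=
    Nat.choose_mul hbm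
  have hfinal : (n * m.choose b * ((b * (s * q) - b).choose (m - b))) * m.choose b
      < (b * (s * q)).choose m * m.choose b := by
    calc (n * m.choose b * ((b * (s * q) - b).choose (m - b))) * m.choose b
        = (n * (m.choose b) ^ 2) * ((b * (s * q) - b).choose (m - b)) := by ring
      _ < (b * (s * q)).choose b * ((b * (s * q) - b).choose (m - b)) :=
          (Nat.mul_lt_mul_right hYpos).2 h7
      _ = (b * (s * q)).choose m * m.choose b := hid.symm
  exact Nat.lt_of_mul_lt_mul_right hfinal

private lemma aux_card_superset {ℓ b m : ℕ} (A : Finset (Fin ℓ)) (hA : A.card = b) :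
    (((univ : Finset (Fin ℓ)).powersetCard m).filter (fun t => A ⊆ t)).card
      ≤ (ℓ - b).choose (m - b) := by
  have := Finset.card_le_card_of_injOn (f := fun t => t \ A)
    (t := (univ \ A).powersetCard (m - b)) (s := ((univ : Finset (Fin ℓ)).powersetCard m).filter (fun t => A ⊆ t))
    ?_ ?_
  · refine this.trans ?_
    rw [Finset.card_powersetCard]
    have : (univ \ A).card = ℓ - b := by
      rw [Finset.card_sdiff_of_subset (Finset.subset_univ A), hA, Finset.card_univ, Fintype.card_fin]
    rw [this]
  · intro t ht
    simp only [Finset.mem_coe, Finset.mem_filter, Finset.mem_powersetCard] at ht ⊢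
    obtain ⟨⟨-, htc⟩, hAt⟩ := ht
    refine ⟨Finset.sdiff_subset_sdiff (Finset.subset_univ t) le_rfl, ?_⟩
    rw [Finset.card_sdiff_of_subset hAt, htc, hA]
  · intro t1 h1 t2 h2 he
    simp only [Finset.mem_coe, Finset.mem_filter, Finset.mem_powersetCard] at h1 h2
    have e1 := Finset.sdiff_union_of_subset h1.2
    have e2 := Finset.sdiff_union_of_subset h2.2
    dsimp only at he
    rw [← e1, ← e2, he]

private lemma aux_design_step {ℓ m a : ℕ} (ham : a + 1 ≤ m) {n : ℕ}
    (hcount : n * m.choose (a+1) * ((ℓ - (a+1)).choose (m - (a+1))) < ℓ.choose m) :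
    ∀ k ≤ n, ∃ T : Finset (Finset (Fin ℓ)), T.card = k ∧ (∀ s ∈ T, s.card = m) ∧
      ∀ s ∈ T, ∀ t ∈ T, s ≠ t → (s ∩ t).card ≤ a := by
  intro k
  induction k with
  | zero => intro _; exact ⟨∅, by simp, by simp, by simp⟩
  | succ k ih =>
    intro hk
    obtain ⟨T, hTcard, hTm, hTint⟩ := ih (Nat.le_of_succ_le hk)
    set P := (univ : Finset (Fin ℓ)).powersetCard m with hP
    set B := P.filter (fun t => ∃ s ∈ T, a + 1 ≤ (s ∩ t).card) with hB
    have hPcard : P.card = ℓ.choose m := by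
      rw [hP, Finset.card_powersetCard, Finset.card_univ, Fintype.card_fin]
    have hBsub : B ⊆ T.biUnion (fun s => (s.powersetCard (a+1)).biUnion
        (fun A => P.filter (fun t => A ⊆ t))) := by
      intro t ht
      simp only [hB, Finset.mem_filter] at ht
      obtain ⟨htP, s, hsT, hst⟩ := ht
      obtain ⟨A, hAsub, hAcard⟩ := Finset.exists_subset_card_eq hst
      simp only [Finset.mem_biUnion]
      exact ⟨s, hsT, A, Finset.mem_powersetCard.2
        ⟨hAsub.trans Finset.inter_subset_left, hAcard⟩,
        Finset.mem_filter.2 ⟨htP, hAsub.trans Finset.inter_subset_right⟩⟩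
    have hBcard : B.card < P.card := by
      have h1 : B.card ≤ T.card * (m.choose (a+1) * ((ℓ - (a+1)).choose (m - (a+1)))) := by
        refine (Finset.card_le_card hBsub).trans ?_
        refine (Finset.card_biUnion_le).trans ?_
        refine (Finset.sum_le_card_nsmul _ _ _ ?_).trans (by rw [smul_eq_mul])
        intro s hs
        refine (Finset.card_biUnion_le).trans ?_
        refine (Finset.sum_le_card_nsmul _ _ ((ℓ - (a+1)).choose (m - (a+1))) ?_).trans ?_
        · intro A hA
          exact aux_card_superset A (Finset.mem_powersetCard.1 hA).2
        · rw [smul_eq_mul, Finset.card_powersetCard, hTm s hs]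
      rw [hPcard]
      refine lt_of_le_of_lt h1 ?_
      refine lt_of_le_of_lt ?_ hcount
      rw [hTcard, ← mul_assoc]
      have : k ≤ n := Nat.le_of_succ_le hk
      exact Nat.mul_le_mul_right _ (Nat.mul_le_mul_right _ this)
    have hns : ¬ P ⊆ B := fun h => absurd (Finset.card_le_card h) (by omega)
    obtain ⟨t, htP, htB⟩ := Finset.not_subset.1 hns
    have htc : t.card = m := (Finset.mem_powersetCard.1 htP).2
    have hgood : ∀ s ∈ T, (s ∩ t).card ≤ a := by
      intro s hs
      by_contra h
      exact htB (Finset.mem_filter.2 ⟨htP, s, hs, by omega⟩)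
    have htT : t ∉ T := by
      intro h
      have := hgood t h
      rw [Finset.inter_self, htc] at this
      omega
    refine ⟨insert t T, ?_, ?_, ?_⟩
    · rw [Finset.card_insert_of_notMem htT, hTcard]
    · intro s hs
      rcases Finset.mem_insert.1 hs with rfl | hs
      · exact htc
      · exact hTm s hs
    · intro s hs u hu hsu
      rcases Finset.mem_insert.1 hs with hs' | hs' <;>
        rcases Finset.mem_insert.1 hu with hu' | hu'
      · exact absurd (hs'.trans hu'.symm) hsu
      · subst hs'; rw [Finset.inter_comm]; exact hgood u hu'
      · subst hu'; exact hgood s hs'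
      · exact hTint s hs' u hu' hsu

private lemma aux_real_bound (a b m n s q : ℕ) (ha : 0 < a) (hb : b = a + 1) (hbm : b ≤ m)
    (hn : 0 < n) (hs : s = ⌈(n : ℝ) ^ ((b : ℝ)⁻¹)⌉₊ + 1) (hq : q = 9 * m * m / (b * b) + 1) :
    ((b * (s * q) : ℕ) : ℝ) ≤ 30 * (n : ℝ) ^ ((a : ℝ)⁻¹) * (m : ℝ) ^ 2 / (a : ℝ) := by
  have hn1 : (1 : ℝ) ≤ n := by exact_mod_cast hn
  have ha1 : (1 : ℝ) ≤ a := by exact_mod_cast ha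
  have hb1 : (1 : ℝ) ≤ b := by exact_mod_cast (by omega : 1 ≤ b)
  have hab : (a : ℝ) ≤ b := by exact_mod_cast (by omega : a ≤ b)
  have hbmR : (b : ℝ) ≤ m := by exact_mod_cast hbm
  have hapos : (0 : ℝ) < a := by linarith
  have hbpos : (0 : ℝ) < b := by linarith
  have hα1 : (1 : ℝ) ≤ (n : ℝ) ^ ((a : ℝ)⁻¹) := Real.one_le_rpow hn1 (by positivity)
  have hsR : (s : ℝ) ≤ 3 * (n : ℝ) ^ ((a : ℝ)⁻¹) := by
    have hx : (n : ℝ) ^ ((b : ℝ)⁻¹) ≤ (n : ℝ) ^ ((a : ℝ)⁻¹) := by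
      apply Real.rpow_le_rpow_of_exponent_le hn1
      exact inv_anti₀ hapos hab
    have hceil : (⌈(n : ℝ) ^ ((b : ℝ)⁻¹)⌉₊ : ℝ) < (n : ℝ) ^ ((b : ℝ)⁻¹) + 1 :=
      Nat.ceil_lt_add_one (by positivity)
    have hscast : (s : ℝ) = (⌈(n : ℝ) ^ ((b : ℝ)⁻¹)⌉₊ : ℝ) + 1 := by
      rw [hs]; push_cast; ring
    rw [hscast]
    linarith
  have hqR : (q : ℝ) ≤ 9 * (m : ℝ) ^ 2 / (b : ℝ) ^ 2 + 1 := by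
    have h1 : ((9 * m * m / (b * b) : ℕ) : ℝ) ≤ (9 * (m : ℝ) * m) / ((b : ℝ) * b) := by
      have h := Nat.cast_div_le (α := ℝ) (m := 9 * m * m) (n := b * b)
      push_cast at h
      exact h
    have hqcast : (q : ℝ) = ((9 * m * m / (b * b) : ℕ) : ℝ) + 1 := by
      rw [hq]; push_cast; ring
    have h2 : (9 * (m : ℝ) * m) / ((b : ℝ) * b) = 9 * (m : ℝ) ^ 2 / (b : ℝ) ^ 2 := by ring
    rw [hqcast, ← h2]
    linarith
  have hq0 : (0 : ℝ) ≤ q := by positivity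
  have hs0 : (0 : ℝ) ≤ s := by positivity
  have hcast : ((b * (s * q) : ℕ) : ℝ) = (b : ℝ) * ((s : ℝ) * (q : ℝ)) := by push_cast; ring
  rw [hcast]
  have h1 : (b : ℝ) * ((s : ℝ) * (q : ℝ))
      ≤ (b : ℝ) * ((3 * (n : ℝ) ^ ((a : ℝ)⁻¹)) * (9 * (m : ℝ) ^ 2 / (b : ℝ) ^ 2 + 1)) := by
    apply mul_le_mul_of_nonneg_left _ hbpos.le
    exact mul_le_mul hsR hqR hq0 (by positivity)
  have h2 : (b : ℝ) * ((3 * (n : ℝ) ^ ((a : ℝ)⁻¹)) * (9 * (m : ℝ) ^ 2 / (b : ℝ) ^ 2 + 1))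
      = 3 * (n : ℝ) ^ ((a : ℝ)⁻¹) * (9 * ((m : ℝ) ^ 2 / (b : ℝ)) + (b : ℝ)) := by
    field_simp
  have h3 : (b : ℝ) ≤ (m : ℝ) ^ 2 / (b : ℝ) := by
    rw [le_div_iff₀ hbpos]
    nlinarith
  have h4 : 3 * (n : ℝ) ^ ((a : ℝ)⁻¹) * (9 * ((m : ℝ) ^ 2 / (b : ℝ)) + (b : ℝ))
      ≤ 3 * (n : ℝ) ^ ((a : ℝ)⁻¹) * (10 * ((m : ℝ) ^ 2 / (b : ℝ))) := by
    apply mul_le_mul_of_nonneg_left _ (by positivity)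
    linarith
  have h5 : 3 * (n : ℝ) ^ ((a : ℝ)⁻¹) * (10 * ((m : ℝ) ^ 2 / (b : ℝ)))
      = 30 * (n : ℝ) ^ ((a : ℝ)⁻¹) * (m : ℝ) ^ 2 / (b : ℝ) := by ring
  have hmono : 30 * (n : ℝ) ^ ((a : ℝ)⁻¹) * (m : ℝ) ^ 2 / (b : ℝ)
      ≤ 30 * (n : ℝ) ^ ((a : ℝ)⁻¹) * (m : ℝ) ^ 2 / (a : ℝ) :=
    div_le_div_of_nonneg_left (by positivity) hapos hab
  linarith

private lemma aux_conclude (ℓ m a n : ℕ) (ham : a + 1 ≤ m)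
    (hcount : n * m.choose (a+1) * ((ℓ - (a+1)).choose (m - (a+1))) < ℓ.choose m) :
    ∃ S : Fin n → Finset (Fin ℓ), (∀ i, (S i).card = m) ∧
      ∀ i j, i ≠ j → (S i ∩ S j).card ≤ a := by
  obtain ⟨T, hTcard, hTm, hTint⟩ := aux_design_step ham hcount n le_rfl
  have e := Finset.equivFinOfCardEq hTcard
  refine ⟨fun i => ((e.symm i : T) : Finset (Fin ℓ)), fun i => hTm _ (e.symm i).2, ?_⟩
  intro i j hij
  apply hTint _ (e.symm i).2 _ (e.symm j).2
  intro hval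
  exact hij (by
    have h2 : e.symm i = e.symm j := Subtype.ext hval
    simpa using congrArg e h2)

/-- Existence of Nisan–Wigderson combinatorial designs: for every `m, n` with
`n < 2^m` and every `0 < a < m`, there exist `n` subsets `S₁,…,Sₙ` of a universe
of size `ℓ = O(n^{1/a} · m² / a)`, each of size exactly `m`, with pairwise
intersections of size at most `a`. -/
theorem nisan_wigderson_design_exists :
    ∃ C : ℕ, ∀ m n a : ℕ, 0 < a → a < m → n < 2 ^ m →
      ∃ (ℓ : ℕ) (S : Fin n → Finset (Fin ℓ)),
        (ℓ : ℝ) ≤ (C : ℝ) * (n : ℝ) ^ ((a : ℝ)⁻¹) * (m : ℝ) ^ 2 / (a : ℝ) ∧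
        (∀ i : Fin n, (S i).card = m) ∧
        (∀ i j : Fin n, i ≠ j → (S i ∩ S j).card ≤ a) := by
  use 30
  intro m n a ha ham _hn
  rcases Nat.eq_zero_or_pos n with rfl | hn
  · refine ⟨0, Fin.elim0, ?_, fun i => i.elim0, fun i => i.elim0⟩
    norm_num
    positivity
  have hbm : a + 1 ≤ m := ham
  have hq1 : 9 * m * m + 1 ≤ (9 * m * m / ((a+1) * (a+1)) + 1) * ((a+1) * (a+1)) :=
    aux_div_bound _ _ (by positivity)
  have hf1 : n < (⌈(n : ℝ) ^ (((a+1 : ℕ) : ℝ)⁻¹)⌉₊ + 1) ^ (a+1) :=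
    aux_ceil_pow n (a+1) (by omega)
  obtain ⟨f3, f4⟩ := aux_count (a+1) (9 * m * m / ((a+1) * (a+1)) + 1)
    (⌈(n : ℝ) ^ (((a+1 : ℕ) : ℝ)⁻¹)⌉₊ + 1) m n hbm (by omega) (by omega) hq1 hf1
  obtain ⟨S, hS1, hS2⟩ := aux_conclude _ m a n hbm f4
  refine ⟨_, S, ?_, hS1, hS2⟩
  have := aux_real_bound a (a+1) m n (⌈(n : ℝ) ^ (((a+1 : ℕ) : ℝ)⁻¹)⌉₊ + 1)
    (9 * m * m / ((a+1) * (a+1)) + 1) ha rfl hbm hn rfl rfl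
  exact_mod_cast this
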